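/- Let g : ℝ → ℝ, g(x) = Σ_{m=0}^k (β_m e^{imx} + conj(β_m) e^{-imx}) with some β_j ≠ 0 for 1 ≤ j ≤ k. If x ∈ ℝ satisfies g'(x) = g''(x) = ⋯ = g^{(4k)}(x) = 0, then cos(j x + arg β_j) = sin(j x + arg β_j) = 0 for that j, which is impossible; hence no such x exists. -/

import Mathlib

set_option maxRecDepth 10000

open Complex Finset

noncomputable def Haux (k : ℕ) (β : ℕ → ℂ) (n : ℕ) (y : ℝ) : ℂ :=
  ∑ m ∈ Finset.range (k + 1),
    (β m * ((m : ℂ) * Complex.I) ^ n * Complex.exp ((m : ℂ) * Complex.I * y)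
      + (starRingEnd ℂ) (β m * ((m : ℂ) * Complex.I) ^ n * Complex.exp ((m : ℂ) * Complex.I * y)))

lemma conj_Haux (k : ℕ) (β : ℕ → ℂ) (n : ℕ) (y : ℝ) :
    (starRingEnd ℂ) (Haux k β n y) = Haux k β n y := by
  simp only [Haux, map_sum, map_add, Complex.conj_conj]
  exact Finset.sum_congr rfl fun m _ => add_comm _ _

lemma hasDerivAt_cexp_mul (c : ℂ) (y : ℝ) :
    HasDerivAt (fun t : ℝ => Complex.exp (c * t)) (c * Complex.exp (c * y)) y := by
  simpa [mul_comm] using (((hasDerivAt_id (y : ℂ)).const_mul c).cexp).comp_ofReal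

lemma hasDerivAt_Haux (k : ℕ) (β : ℕ → ℂ) (n : ℕ) (y : ℝ) :
    HasDerivAt (Haux k β n) (Haux k β (n + 1) y) y := by
  unfold Haux
  apply HasDerivAt.fun_sum
  intro m _
  have h1 : HasDerivAt
      (fun t : ℝ => β m * ((m : ℂ) * Complex.I) ^ n * Complex.exp ((m : ℂ) * Complex.I * t))
      (β m * ((m : ℂ) * Complex.I) ^ (n + 1) * Complex.exp ((m : ℂ) * Complex.I * y)) y := by
    have := (hasDerivAt_cexp_mul ((m : ℂ) * Complex.I) y).const_mul
      (β m * ((m : ℂ) * Complex.I) ^ n)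
    refine this.congr_deriv ?_
    ring
  have h2 := h1.add h1.star
  simp only [starRingEnd_apply]
  exact h2

lemma key (k : ℕ) (β : ℕ → ℂ) (g : ℝ → ℝ)
    (hg : ∀ x : ℝ, (g x : ℂ) = ∑ m ∈ Finset.range (k + 1),
      (β m * Complex.exp ((m : ℝ) * x * Complex.I) +
        (starRingEnd ℂ) (β m) * Complex.exp (-((m : ℝ) * x * Complex.I)))) :
    ∀ (n : ℕ) (y : ℝ), ((iteratedDeriv n g y : ℝ) : ℂ) = Haux k β n y := by
  intro n
  induction n with
  | zero =>
    intro y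
    rw [iteratedDeriv_zero, hg y]
    unfold Haux
    refine Finset.sum_congr rfl fun m _ => ?_
    have e1 : ((m : ℝ) : ℂ) * (y : ℂ) * Complex.I = (m : ℂ) * Complex.I * (y : ℂ) := by
      push_cast; ring
    have e2 : -((m : ℂ) * Complex.I * (y : ℂ)) =
        (starRingEnd ℂ) ((m : ℂ) * Complex.I * (y : ℂ)) := by
      simp [Complex.conj_ofReal]
    rw [e1, pow_zero, mul_one, e2, Complex.exp_conj, ← map_mul]
  | succ n ih =>
    intro y
    have hd : HasDerivAt (fun t : ℝ => ((iteratedDeriv n g t : ℝ) : ℂ))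
        (Haux k β (n + 1) y) y :=
      (hasDerivAt_Haux k β n y).congr_of_eventuallyEq
        (Filter.Eventually.of_forall fun t => ih t)
    have hd2 : HasDerivAt (iteratedDeriv n g) ((Haux k β (n + 1) y).re) y := by
      have := (Complex.reCLM.hasFDerivAt).comp_hasDerivAt y hd
      simpa [Function.comp_def] using this
    have hre : ((Haux k β (n + 1) y).re : ℂ) = Haux k β (n + 1) y :=
      Complex.conj_eq_iff_re.mp (conj_Haux k β (n + 1) y)
    rw [iteratedDeriv_succ, hd2.deriv, hre]

lemma vandermonde_zero {N : ℕ} (v w : Fin N → ℂ) (hv : Function.Injective v)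
    (hv0 : ∀ i, v i ≠ 0)
    (h : ∀ i : Fin N, ∑ j, v j ^ ((i : ℕ) + 1) * w j = 0) : ∀ j, w j = 0 := by
  set M : Matrix (Fin N) (Fin N) ℂ := Matrix.of fun i j => v j ^ ((i : ℕ) + 1) with hMdef
  have hM : M = (Matrix.vandermonde v).transpose * Matrix.diagonal v := by
    ext i j
    simp [hMdef, Matrix.mul_diagonal, Matrix.vandermonde, pow_succ]
  have hdet : IsUnit M.det := by
    rw [hM, Matrix.det_mul, Matrix.det_transpose, Matrix.det_diagonal]
    exact Ne.isUnit (mul_ne_zero (Matrix.det_vandermonde_ne_zero_iff.mpr hv)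
      (Finset.prod_ne_zero_iff.mpr fun i _ => hv0 i))
  have hinj : Function.Injective M.mulVec :=
    Matrix.mulVec_injective_iff_isUnit.mpr ((Matrix.isUnit_iff_isUnit_det M).mpr hdet)
  have hzero : M.mulVec w = M.mulVec 0 := by
    rw [Matrix.mulVec_zero]
    funext i
    simpa [Matrix.mulVec, dotProduct, hMdef] using h i
  intro j
  exact congrFun (hinj hzero) j

theorem no_point_with_all_derivatives_vanishing
    (k : ℕ) (hk : 1 ≤ k) (β : ℕ → ℂ)
    (hβ : ∃ j, 1 ≤ j ∧ j ≤ k ∧ β j ≠ 0)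
    (g : ℝ → ℝ)
    (hg : ∀ x : ℝ, (g x : ℂ) = ∑ m ∈ Finset.range (k + 1),
      (β m * Complex.exp ((m : ℝ) * x * Complex.I) +
        (starRingEnd ℂ) (β m) * Complex.exp (-((m : ℝ) * x * Complex.I)))) :
    ¬ ∃ x : ℝ, ∀ i, 1 ≤ i → i ≤ 4 * k → iteratedDeriv i g x = 0 := by
  rintro ⟨x, hx⟩
  obtain ⟨j, hj1, hjk, hβj⟩ := hβ
  set c : ℕ → ℂ := fun m => β m * Complex.exp ((m : ℂ) * Complex.I * x) with hcdef
  have hvan : ∀ n, 1 ≤ n → n ≤ 4 * k → Haux k β n x = 0 := by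
    intro n h1 h2
    rw [← key k β g hg n x, hx n h1 h2]
    simp
  set V : Fin k ⊕ Fin k → ℂ :=
    Sum.elim (fun i : Fin k => (((i : ℕ) : ℂ) + 1) * Complex.I)
      (fun i : Fin k => -((((i : ℕ) : ℂ) + 1) * Complex.I)) with hVdef
  set W : Fin k ⊕ Fin k → ℂ :=
    Sum.elim (fun i : Fin k => c ((i : ℕ) + 1))
      (fun i : Fin k => (starRingEnd ℂ) (c ((i : ℕ) + 1))) with hWdef
  set v : Fin (k + k) → ℂ := fun p => V (finSumFinEquiv.symm p) with hvdef
  set w : Fin (k + k) → ℂ := fun p => W (finSumFinEquiv.symm p) with hwdef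
  have hVinj : Function.Injective V := by
    rintro (a | a) (b | b) hab <;> simp only [hVdef, Sum.elim_inl, Sum.elim_inr] at hab
    · have h1 : ((a : ℕ) : ℂ) + 1 = ((b : ℕ) : ℂ) + 1 :=
        mul_right_cancel₀ Complex.I_ne_zero hab
      have h2 : (a : ℕ) + 1 = (b : ℕ) + 1 := by exact_mod_cast h1
      exact congrArg Sum.inl (Fin.ext (by omega))
    · exfalso
      have h1 : ((((a : ℕ) : ℂ) + 1) + (((b : ℕ) : ℂ) + 1)) * Complex.I = 0 := by
        linear_combination hab
      have h2 : (((a : ℕ) : ℂ) + 1) + (((b : ℕ) : ℂ) + 1) = 0 := by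
        rcases mul_eq_zero.mp h1 with h | h
        · exact h
        · exact absurd h Complex.I_ne_zero
      have h3 : ((a : ℕ) + 1 + ((b : ℕ) + 1) : ℕ) = 0 := by exact_mod_cast h2
      omega
    · exfalso
      have h1 : ((((a : ℕ) : ℂ) + 1) + (((b : ℕ) : ℂ) + 1)) * Complex.I = 0 := by
        linear_combination -hab
      have h2 : (((a : ℕ) : ℂ) + 1) + (((b : ℕ) : ℂ) + 1) = 0 := by
        rcases mul_eq_zero.mp h1 with h | h
        · exact h
        · exact absurd h Complex.I_ne_zero
      have h3 : ((a : ℕ) + 1 + ((b : ℕ) + 1) : ℕ) = 0 := by exact_mod_cast h2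
      omega
    · have h1 : ((((a : ℕ) : ℂ) + 1) - (((b : ℕ) : ℂ) + 1)) * Complex.I = 0 := by
        linear_combination -hab
      have h2 : (((a : ℕ) : ℂ) + 1) = (((b : ℕ) : ℂ) + 1) := by
        rcases mul_eq_zero.mp h1 with h | h
        · linear_combination h
        · exact absurd h Complex.I_ne_zero
      have h3 : (a : ℕ) + 1 = (b : ℕ) + 1 := by exact_mod_cast h2
      exact congrArg Sum.inr (Fin.ext (by omega))
  have hvinj : Function.Injective v :=
    hVinj.comp finSumFinEquiv.symm.injective
  have hv0 : ∀ p, v p ≠ 0 := by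
    intro p
    rw [hvdef]
    rcases hpe : finSumFinEquiv.symm p with a | a <;>
      simp [hVdef, hpe, Complex.I_ne_zero, Nat.cast_add_one_ne_zero]
  have hsum : ∀ i : Fin (k + k), ∑ p, v p ^ ((i : ℕ) + 1) * w p = 0 := by
    intro i
    set n := (i : ℕ) + 1 with hn
    have h0 := hvan n (Nat.le_add_left 1 _) (by have := i.isLt; omega)
    have expand : Haux k β n x =
        (∑ m ∈ Finset.range k, (((m : ℂ) + 1) * Complex.I) ^ n * c (m + 1))
          + ∑ m ∈ Finset.range k,
            (-(((m : ℂ) + 1) * Complex.I)) ^ n * (starRingEnd ℂ) (c (m + 1)) := by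
      unfold Haux
      rw [Finset.sum_range_succ']
      have hzero : β 0 * ((0 : ℂ) * Complex.I) ^ n * Complex.exp ((0 : ℂ) * Complex.I * x)
          + (starRingEnd ℂ) (β 0 * ((0 : ℂ) * Complex.I) ^ n
            * Complex.exp ((0 : ℂ) * Complex.I * x)) = 0 := by
        simp [zero_pow (by omega : n ≠ 0)]
      push_cast
      rw [hzero, add_zero, Finset.sum_add_distrib]
      congr 1
      · refine Finset.sum_congr rfl fun m _ => ?_
        rw [hcdef]
        push_cast
        ring
      · refine Finset.sum_congr rfl fun m _ => ?_
        rw [hcdef]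
        simp only [map_mul, map_pow, ← Complex.exp_conj, Complex.conj_I,
          Complex.conj_ofReal, map_natCast, map_add, map_one, Nat.cast_add, Nat.cast_one]
        ring
    have expand2 : ∑ p, v p ^ n * w p =
        (∑ m ∈ Finset.range k, (((m : ℂ) + 1) * Complex.I) ^ n * c (m + 1))
          + ∑ m ∈ Finset.range k,
            (-(((m : ℂ) + 1) * Complex.I)) ^ n * (starRingEnd ℂ) (c (m + 1)) := by
      rw [← Equiv.sum_comp finSumFinEquiv (fun p => v p ^ n * w p), Fintype.sum_sum_type]
      congr 1
      · rw [← Fin.sum_univ_eq_sum_range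
          (fun m => (((m : ℂ) + 1) * Complex.I) ^ n * c (m + 1)) k]
        refine Finset.sum_congr rfl fun a _ => ?_
        simp only [hvdef, hwdef, Equiv.symm_apply_apply, hVdef, hWdef,
          Sum.elim_inl, Sum.elim_inr]
      · rw [← Fin.sum_univ_eq_sum_range
          (fun m => (-(((m : ℂ) + 1) * Complex.I)) ^ n * (starRingEnd ℂ) (c (m + 1))) k]
        refine Finset.sum_congr rfl fun a _ => ?_
        simp only [hvdef, hwdef, Equiv.symm_apply_apply, hVdef, hWdef,
          Sum.elim_inl, Sum.elim_inr]
    rw [expand2, ← expand]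
    exact h0
  have hw0 := vandermonde_zero v w hvinj hv0 hsum
  have hj' : j - 1 < k := by omega
  have hfin := hw0 (finSumFinEquiv (Sum.inl ⟨j - 1, hj'⟩))
  simp only [hwdef, Equiv.symm_apply_apply, hWdef, Sum.elim_inl] at hfin
  have hjj : (j - 1) + 1 = j := by omega
  rw [hjj, hcdef] at hfin
  exact mul_ne_zero hβj (Complex.exp_ne_zero _) hfin
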